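/- Let X, Y be linearly independent vectors in a 2-dimensional real inner product space and let A be linear with |det A| = 1. If the angle θₙ between AⁿX and AⁿY tends to 0 as n → ∞, then max(‖AⁿX‖, ‖AⁿY‖) → ∞. -/

import Mathlib

open InnerProductGeometry Filter
open scoped RealInnerProductSpace


private lemma sqrt_mul_le_max {a d : ℝ} (ha : 0 ≤ a) (hd : 0 ≤ d) :
    Real.sqrt (a * d) ≤ max a d := by
  have hm : 0 ≤ max a d := le_trans ha (le_max_left _ _)
  have h1 : a * d ≤ (max a d) ^ 2 := by
    rcases le_total a d with h | h
    · rw [max_eq_right h]; nlinarith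
    · rw [max_eq_left h]; nlinarith
  calc Real.sqrt (a * d) ≤ Real.sqrt ((max a d) ^ 2) := Real.sqrt_le_sqrt h1
    _ = max a d := Real.sqrt_sq hm

/-- For linearly independent `X, Y` in a 2-dimensional real inner product space and `A` linear
with `|det A| = 1`: if the angle between `AⁿX` and `AⁿY` tends to `0`, then
`max(‖AⁿX‖, ‖AⁿY‖) → ∞`. -/
theorem shrinking_angle_forces_norm_growth {V : Type*} [NormedAddCommGroup V]
    [InnerProductSpace ℝ V] [FiniteDimensional ℝ V] (hdim : Module.finrank ℝ V = 2)
    (X Y : V) (hind : LinearIndependent ℝ ![X, Y])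
    (A : V →ₗ[ℝ] V) (hdet : |LinearMap.det A| = 1)
    (hangle : Tendsto (fun n : ℕ => angle ((A ^ n) X) ((A ^ n) Y)) atTop (nhds 0)) :
    Tendsto (fun n : ℕ => max ‖(A ^ n) X‖ ‖(A ^ n) Y‖) atTop atTop := by
  haveI : Fact (Module.finrank ℝ V = 2) := ⟨hdim⟩
  -- the basis given by X, Y
  have hcard : Fintype.card (Fin 2) = Module.finrank ℝ V := by simp [hdim]
  let e : Module.Basis (Fin 2) ℝ V := basisOfLinearIndependentOfCardEqFinrank hind hcard
  have he : ⇑e = ![X, Y] := coe_basisOfLinearIndependentOfCardEqFinrank hind hcard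
  -- an orthonormal basis and its area form
  let b : OrthonormalBasis (Fin 2) ℝ V :=
    (stdOrthonormalBasis ℝ V).reindex (finCongr (by rw [hdim]))
  let o : Orientation ℝ V (Fin 2) := b.toBasis.orientation
  set ω : V →ₗ[ℝ] V →ₗ[ℝ] ℝ := o.areaForm with hω
  -- the area form transforms under A by det A
  have hA : ∀ x y : V, ω (A x) (A y) = LinearMap.det A * ω x y := by
    intro x y
    have hcomp : ![A x, A y] = ⇑A ∘ ![x, y] := by
      funext i; fin_cases i <;> simp
    have hxy : ∀ u v : V, ω u v = (o.volumeForm ⇑e) * e.det ![u, v] := by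
      intro u v
      rw [hω, o.areaForm_to_volumeForm]
      conv_lhs => rw [o.volumeForm.eq_smul_basis_det e]
      simp
    rw [hxy, hxy, hcomp, Module.Basis.det_comp]
    ring
  -- iterate
  have hAn : ∀ n : ℕ, |ω ((A ^ n) X) ((A ^ n) Y)| = |ω X Y| := by
    intro n
    induction n with
    | zero => simp
    | succ n ih =>
      have h1 : (A ^ (n + 1)) X = A ((A ^ n) X) := by
        rw [pow_succ']; rfl
      have h2 : (A ^ (n + 1)) Y = A ((A ^ n) Y) := by
        rw [pow_succ']; rfl
      rw [h1, h2, hA, abs_mul, hdet, one_mul, ih]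
  -- the constant c is positive
  set c : ℝ := |ω X Y| with hc
  have hcpos : 0 < c := by
    have h1 : |ω X Y| = |b.toBasis.det ![X, Y]| := by
      rw [hω, o.areaForm_to_volumeForm, o.volumeForm_robust' b]
    have h2 : b.toBasis.det ![X, Y] ≠ 0 := by
      rw [← he]
      exact (b.toBasis.isUnit_det e).ne_zero
    rw [hc, h1]
    exact abs_pos.mpr h2
  -- sin θₙ * (‖uₙ‖ * ‖vₙ‖) = c
  have key : ∀ n : ℕ,
      Real.sin (angle ((A ^ n) X) ((A ^ n) Y)) * (‖(A ^ n) X‖ * ‖(A ^ n) Y‖) = c := by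
    intro n
    set u := (A ^ n) X
    set v := (A ^ n) Y
    have h1 := sin_angle_mul_norm_mul_norm u v
    have h2 : (inner ℝ u u : ℝ) * (inner ℝ v v : ℝ) - (inner ℝ u v : ℝ) * (inner ℝ u v : ℝ) = (ω u v) ^ 2 := by
      have := o.inner_sq_add_areaForm_sq u v
      rw [real_inner_self_eq_norm_sq, real_inner_self_eq_norm_sq]
      nlinarith [this]
    rw [h1, h2, Real.sqrt_sq_eq_abs]
    exact hAn n
  -- sin θₙ → 0 within (0, ∞)
  have hsin0 : Tendsto (fun n : ℕ => Real.sin (angle ((A ^ n) X) ((A ^ n) Y))) atTop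
      (nhdsWithin 0 (Set.Ioi 0)) := by
    apply tendsto_nhdsWithin_of_tendsto_nhds_of_eventually_within
    · have : Continuous Real.sin := Real.continuous_sin
      simpa [Function.comp_def] using (this.tendsto 0).comp hangle
    · filter_upwards with n
      have hne : Real.sin (angle ((A ^ n) X) ((A ^ n) Y)) ≠ 0 := by
        intro h0
        have := key n
        rw [h0, zero_mul] at this
        exact hcpos.ne this
      have hnonneg : 0 ≤ Real.sin (angle ((A ^ n) X) ((A ^ n) Y)) :=
        Real.sin_nonneg_of_nonneg_of_le_pi (angle_nonneg _ _) (angle_le_pi _ _)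
      exact lt_of_le_of_ne hnonneg (Ne.symm hne)
  -- hence the product of norms tends to ∞
  have hProd : Tendsto (fun n : ℕ => ‖(A ^ n) X‖ * ‖(A ^ n) Y‖) atTop atTop := by
    have hinv : Tendsto (fun n : ℕ =>
        (Real.sin (angle ((A ^ n) X) ((A ^ n) Y)))⁻¹) atTop atTop :=
      hsin0.inv_tendsto_nhdsGT_zero
    have hEq : ∀ n : ℕ, ‖(A ^ n) X‖ * ‖(A ^ n) Y‖ =
        c * (Real.sin (angle ((A ^ n) X) ((A ^ n) Y)))⁻¹ := by
      intro n
      have hne : Real.sin (angle ((A ^ n) X) ((A ^ n) Y)) ≠ 0 := by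
        intro h0
        have := key n
        rw [h0, zero_mul] at this
        exact hcpos.ne this
      field_simp
      have := key n
      linarith [this]
    simp only [hEq]
    exact hinv.const_mul_atTop hcpos
  -- max ≥ sqrt of product
  have hsqrt : Tendsto Real.sqrt atTop atTop := by
    apply tendsto_atTop_atTop_of_monotone (fun x y h => Real.sqrt_le_sqrt h)
    intro q
    exact ⟨(max q 0) ^ 2, by
      rw [Real.sqrt_sq (le_max_right q 0)]; exact le_max_left q 0⟩
  exact tendsto_atTop_mono
    (fun n => sqrt_mul_le_max (norm_nonneg ((A ^ n) X)) (norm_nonneg ((A ^ n) Y)))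
    (hsqrt.comp hProd)
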